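/- Let q be even, n ≥ 2, and suppose n is even. Let δ ∈ F_{q^{2n}} \ F_{q^n}, fix k with gcd(n,k) = 1, and set Q(x) = (x^{q^k} + δx)(x^{q^k} + δ^{q^n}x). Then Q is not a permutation of F_{q^n}. (The case L(x) = x^{q^k}.) -/

import Mathlib

open Finset Polynomial

section AuxTrace

variable {F : Type} [Field F]

/-- absolute-trace-like map on a field of characteristic 2 and cardinality `2^N`. -/
noncomputable def auxTr (N : ℕ) (x : F) : F := ∑ j ∈ Finset.range N, x ^ (2 ^ j)

variable [CharP F 2]

lemma auxTr_add (N : ℕ) (x y : F) : auxTr N (x + y) = auxTr N x + auxTr N y := by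
  unfold auxTr
  rw [← Finset.sum_add_distrib]
  exact Finset.sum_congr rfl fun j _ => add_pow_char_pow ..

lemma auxTr_zero (N : ℕ) : auxTr (F := F) N 0 = 0 := by
  unfold auxTr
  refine Finset.sum_eq_zero fun j _ => zero_pow (by positivity)

variable [Fintype F] {N : ℕ}

lemma auxTr_mul_self (hcard : Fintype.card F = 2 ^ N) (x : F) :
    auxTr N (x * x) = auxTr N x := by
  have key : ∀ w : F, ∑ j ∈ Finset.range N, (w * w) ^ (2 ^ j)
      = ∑ j ∈ Finset.range N, w ^ (2 ^ (j + 1)) := by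
    intro w
    refine Finset.sum_congr rfl fun j _ => ?_
    rw [pow_succ, pow_mul, pow_two, mul_pow]
  have h1 : (x : F) ^ (2 ^ N) = x := by
    rw [← hcard]; exact FiniteField.pow_card x
  have h2 : x ^ (2 ^ 0) + ∑ j ∈ Finset.range N, x ^ (2 ^ (j + 1))
      = (∑ j ∈ Finset.range N, x ^ (2 ^ j)) + x ^ (2 ^ N) := by
    rw [← Finset.sum_range_succ]
    rw [Finset.sum_range_succ' (fun j => x ^ (2 ^ j)) N]
    exact add_comm _ _
  unfold auxTr
  rw [key x]
  have : x ^ (2 ^ 0) = x := by norm_num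
  rw [this, h1] at h2
  -- h2 : x + ∑ = (∑) + x
  calc ∑ j ∈ Finset.range N, x ^ (2 ^ (j + 1))
      = x + (x + ∑ j ∈ Finset.range N, x ^ (2 ^ (j + 1))) := by
        rw [← add_assoc, CharTwo.add_self_eq_zero, zero_add]
    _ = x + ((∑ j ∈ Finset.range N, x ^ (2 ^ j)) + x) := by rw [h2]
    _ = ∑ j ∈ Finset.range N, x ^ (2 ^ j) := by
        rw [add_comm (∑ j ∈ Finset.range N, x ^ (2 ^ j)) x, ← add_assoc,
          CharTwo.add_self_eq_zero, zero_add]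

lemma auxTr_idem (hcard : Fintype.card F = 2 ^ N) (x : F) :
    auxTr N x * auxTr N x = auxTr N x := by
  unfold auxTr
  rw [CharTwo.sum_mul_self]
  calc ∑ j ∈ Finset.range N, x ^ 2 ^ j * x ^ 2 ^ j
      = ∑ j ∈ Finset.range N, (x * x) ^ 2 ^ j := by
        refine Finset.sum_congr rfl fun j _ => ?_
        rw [mul_pow]
    _ = auxTr N (x * x) := rfl
    _ = auxTr N x := auxTr_mul_self hcard x

lemma auxTr_vals (hcard : Fintype.card F = 2 ^ N) (x : F) :
    auxTr N x = 0 ∨ auxTr N x = 1 := by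
  have h := auxTr_idem hcard x
  have h2 : auxTr N x * (auxTr N x - 1) = 0 := by
    rw [mul_sub, h, mul_one, sub_self]
  rcases mul_eq_zero.mp h2 with h0 | h1
  · exact Or.inl h0
  · exact Or.inr (sub_eq_zero.mp h1)

end AuxTrace

section AuxTrace2

variable {F : Type} [Field F] [CharP F 2] [Fintype F] {N : ℕ}

lemma auxTr_sq_pow (hcard : Fintype.card F = 2 ^ N) (j : ℕ) (x : F) :
    auxTr N (x ^ (2 ^ j)) = auxTr N x := by
  induction j with
  | zero => norm_num
  | succ j ih =>
      have : x ^ (2 ^ (j + 1)) = (x ^ (2 ^ j)) * (x ^ (2 ^ j)) := by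
        rw [← pow_add, pow_succ]
        ring_nf
      rw [this, auxTr_mul_self hcard, ih]

lemma auxTr_exists_ne (hN : 0 < N) (hcard : Fintype.card F = 2 ^ N) :
    ∃ z : F, auxTr N z ≠ 0 := by
  by_contra hall
  push_neg at hall
  classical
  set P : F[X] := ∑ j ∈ Finset.range N, (X : F[X]) ^ (2 ^ j) with hP
  have hdeg : P.natDegree < Fintype.card F := by
    have h1 : P.natDegree ≤ 2 ^ (N - 1) := by
      refine Polynomial.natDegree_sum_le_of_forall_le _ _ fun j hj => ?_
      rw [Polynomial.natDegree_X_pow]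
      exact Nat.pow_le_pow_right (by norm_num) (by
        have := Finset.mem_range.mp hj; omega)
    have h2 : (2 : ℕ) ^ (N - 1) < 2 ^ N := Nat.pow_lt_pow_right (by norm_num) (by omega)
    omega
  have heval : ∀ x : F, P.eval x = 0 := by
    intro x
    have : P.eval x = auxTr N x := by
      rw [hP, Polynomial.eval_finset_sum]
      unfold auxTr
      refine Finset.sum_congr rfl fun j _ => by simp
    rw [this, hall]
  have hP0 : P = 0 :=
    Polynomial.eq_zero_of_natDegree_lt_card_of_eval_eq_zero P Function.injective_id
      (fun x => heval x) hdeg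
  have hc : P.coeff 1 = 1 := by
    rw [hP, Polynomial.finset_sum_coeff]
    have : ∀ j ∈ Finset.range N, ((X : F[X]) ^ (2 ^ j)).coeff 1 = if j = 0 then 1 else 0 := by
      intro j _
      rw [Polynomial.coeff_X_pow]
      by_cases hj : j = 0
      · subst hj; norm_num
      · have h2j : 2 ^ j ≠ 1 := by
          have : 1 < 2 ^ j := Nat.one_lt_two_pow_iff.mpr hj
          omega
        simp [hj, h2j, Ne.symm h2j]
    rw [Finset.sum_congr rfl this, Finset.sum_ite_eq' (Finset.range N) 0 (fun _ => (1 : F))]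
    simp [Finset.mem_range, hN]
  rw [hP0] at hc
  simp at hc

end AuxTrace2

section AuxChi

variable {F : Type} [Field F]

open Classical in
/-- sign character attached to `auxTr`. -/
noncomputable def auxChi (N : ℕ) (w : F) : ℤ := if auxTr N w = 0 then 1 else -1

variable [CharP F 2] [Fintype F] {N : ℕ}

lemma auxChi_zero (N : ℕ) : auxChi (F := F) N 0 = 1 := by
  simp [auxChi, auxTr_zero]

lemma auxChi_add (hcard : Fintype.card F = 2 ^ N) (w z : F) :
    auxChi N (w + z) = auxChi N w * auxChi N z := by
  unfold auxChi
  rw [auxTr_add]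
  rcases auxTr_vals hcard w with hw | hw <;> rcases auxTr_vals hcard z with hz | hz <;>
    simp [hw, hz, CharTwo.add_self_eq_zero, one_ne_zero]

open Classical in
/-- A nonzero `{0,1}`-valued additive map on a finite field of char 2 is balanced. -/
lemma aux_balanced (hcard : Fintype.card F = 2 ^ N) (f : F → F)
    (hadd : ∀ w z, f (w + z) = f w + f z)
    (hvals : ∀ w, f w = 0 ∨ f w = 1)
    (hne : ∃ w, f w ≠ 0) :
    ∑ w : F, (if f w = 0 then (1 : ℤ) else -1) = 0 := by
  classical
  obtain ⟨w₀, hw₀⟩ := hne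
  have hw₀1 : f w₀ = 1 := (hvals w₀).resolve_left hw₀
  have hre : ∑ w : F, (if f w = 0 then (1 : ℤ) else -1)
      = ∑ w : F, (if f (w + w₀) = 0 then (1 : ℤ) else -1) := by
    refine (Fintype.sum_equiv (Equiv.addRight w₀)
      (fun w => if f (w + w₀) = 0 then (1 : ℤ) else -1)
      (fun w => if f w = 0 then (1 : ℤ) else -1) (fun w => rfl)).symm
  have hterm : ∀ w : F, (if f (w + w₀) = 0 then (1 : ℤ) else -1)
      = - (if f w = 0 then (1 : ℤ) else -1) := by
    intro w
    rw [hadd w w₀, hw₀1]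
    rcases hvals w with hw | hw
    · simp [hw]
    · rw [hw]
      have : (1 : F) + 1 = 0 := by
        have := CharTwo.two_eq_zero (R := F)
        linear_combination this
      simp [this, hw, one_ne_zero]
  have h1 : ∑ w : F, (if f w = 0 then (1 : ℤ) else -1)
      = ∑ w : F, -(if f w = 0 then (1 : ℤ) else -1) := by
    rw [hre]
    exact Finset.sum_congr rfl fun w _ => hterm w
  have hfin := h1.trans (Finset.sum_neg_distrib _)
  omega

end AuxChi

set_option maxHeartbeats 1000000 in
/-- **Example 1.** For `q` even and `n` even, with
`L(x) = x^{q^k}`, `gcd(n,k) = 1`, the norm-type map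
`Q(x) = (x^{q^k}+δx)(x^{q^k}+δ^{qⁿ}x)` is not a permutation of `F_{qⁿ}`. -/
theorem not_perm_monomial_case (q n k : ℕ) (hq : Even q) (hq' : IsPrimePow q)
    (hn : Even n) (hn' : 2 ≤ n) (hk : Nat.gcd n k = 1)
    (K Lf E : Type) [Field K] [Fintype K] [Field Lf] [Field E]
    [Algebra K Lf] [Algebra Lf E] [Algebra K E] [IsScalarTower K Lf E]
    (hcard : Fintype.card K = q)
    (hdim : Module.finrank K Lf = n) (hdim2 : Module.finrank Lf E = 2)
    (δ : E) (hδ : δ ∉ Set.range (algebraMap Lf E))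
    (Q : Lf → Lf)
    (hQ : ∀ x, algebraMap Lf E (Q x) =
      ((algebraMap Lf E x) ^ (q ^ k) + δ * algebraMap Lf E x) *
      ((algebraMap Lf E x) ^ (q ^ k) + δ ^ (q ^ n) * algebraMap Lf E x)) :
    ¬ Function.Bijective Q := by
  intro hbij
  classical
  -- characteristic 2 and `q = 2 ^ e`
  obtain ⟨hK2, e, he, hq2e⟩ : CharP K 2 ∧ ∃ e, 0 < e ∧ q = 2 ^ e := by
    obtain ⟨d, hp, hc⟩ := FiniteField.card K (ringChar K)
    have h2 : ringChar K = 2 := by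
      have hdvd : 2 ∣ ringChar K ^ (d : ℕ) := by
        rw [← hc, hcard]; exact hq.two_dvd
      have h2p := Nat.Prime.dvd_of_dvd_pow Nat.prime_two hdvd
      exact ((Nat.prime_dvd_prime_iff_eq Nat.prime_two hp).mp h2p).symm
    refine ⟨h2 ▸ ringChar.charP K, d, d.2, ?_⟩
    rw [← hcard, hc, h2]
  haveI := hK2
  have hq2 : 2 ≤ q := by
    rw [hq2e]; calc 2 = 2 ^ 1 := (pow_one 2).symm
                  _ ≤ 2 ^ e := Nat.pow_le_pow_right (by norm_num) he
  -- finiteness of Lf and E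
  haveI : FiniteDimensional K Lf := FiniteDimensional.of_finrank_pos (by rw [hdim]; omega)
  haveI : Finite Lf := Module.finite_of_finite K
  letI : Fintype Lf := Fintype.ofFinite Lf
  haveI : FiniteDimensional Lf E := FiniteDimensional.of_finrank_pos (by rw [hdim2]; omega)
  haveI : Finite E := Module.finite_of_finite Lf
  letI : Fintype E := Fintype.ofFinite E
  have hLcard : Fintype.card Lf = q ^ n := by
    rw [Module.card_eq_pow_finrank (K := K), hcard, hdim]
  have hEcard : Fintype.card E = q ^ n * q ^ n := by
    rw [Module.card_eq_pow_finrank (K := Lf), hLcard, hdim2]; ring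
  haveI hL2 : CharP Lf 2 := charP_of_injective_algebraMap (algebraMap K Lf).injective 2
  haveI hE2 : CharP E 2 := charP_of_injective_algebraMap (algebraMap K E).injective 2
  -- Frobenius additivity
  have hfrobL : ∀ (j : ℕ) (x y : Lf), (x + y) ^ q ^ j = x ^ q ^ j + y ^ q ^ j := by
    intro j x y
    rw [hq2e, ← pow_mul]
    exact add_pow_char_pow ..
  have hpowL : ∀ x : Lf, x ^ q ^ n = x := by
    intro x; rw [← hLcard]; exact FiniteField.pow_card x
  -- fixed points of x ↦ x^(q^n) on E are exactly the image of Lf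
  have hfix : ∀ z : E, z ^ q ^ n = z → ∃ t : Lf, algebraMap Lf E t = z := by
    intro z hz
    by_contra hzr
    push_neg at hzr
    set Φ : Polynomial E := Polynomial.X ^ q ^ n - Polynomial.X with hΦ
    have hqn2 : 2 ≤ q ^ n := by
      calc 2 ≤ q := hq2
        _ = q ^ 1 := (pow_one q).symm
        _ ≤ q ^ n := Nat.pow_le_pow_right (by omega) (by omega)
    have hΦdeg : Φ.natDegree = q ^ n := by
      rw [hΦ]
      rw [Polynomial.natDegree_sub_eq_left_of_natDegree_lt]
      · exact Polynomial.natDegree_X_pow _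
      · rw [Polynomial.natDegree_X_pow, Polynomial.natDegree_X]; omega
    have hΦne : Φ ≠ 0 := by
      intro h; rw [h, Polynomial.natDegree_zero] at hΦdeg; omega
    have hroot : ∀ w : E, w ^ q ^ n = w → w ∈ Φ.roots.toFinset := by
      intro w hw
      rw [Multiset.mem_toFinset, Polynomial.mem_roots hΦne]
      simp [hΦ, Polynomial.IsRoot, hw]
    set img : Finset E := Finset.univ.image (algebraMap Lf E) with himg
    have himgcard : img.card = q ^ n := by
      rw [himg, Finset.card_image_of_injective _ (algebraMap Lf E).injective,
        Finset.card_univ, hLcard]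
    have hsub : insert z img ⊆ Φ.roots.toFinset := by
      intro w hw
      rcases Finset.mem_insert.mp hw with rfl | hw
      · exact hroot w hz
      · obtain ⟨t, _, rfl⟩ := Finset.mem_image.mp hw
        refine hroot _ ?_
        rw [← map_pow, hpowL]
    have hzimg : z ∉ img := by
      intro hz'
      obtain ⟨t, _, ht⟩ := Finset.mem_image.mp hz'
      exact hzr t ht
    have hcard1 : (insert z img).card = q ^ n + 1 := by
      rw [Finset.card_insert_of_notMem hzimg, himgcard]
    have hle := Finset.card_le_card hsub
    have hle2 : Φ.roots.toFinset.card ≤ q ^ n := by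
      calc Φ.roots.toFinset.card ≤ Multiset.card Φ.roots := Multiset.toFinset_card_le _
        _ ≤ Φ.natDegree := Polynomial.card_roots' Φ
        _ = q ^ n := hΦdeg
    omega
  -- the coefficients a, b
  obtain ⟨a, ha⟩ : ∃ t : Lf, algebraMap Lf E t = δ + δ ^ q ^ n := by
    refine hfix _ ?_
    have hfrobE : (δ + δ ^ q ^ n) ^ q ^ n = δ ^ q ^ n + (δ ^ q ^ n) ^ q ^ n := by
      rw [hq2e, ← pow_mul]
      exact add_pow_char_pow ..
    rw [hfrobE, ← pow_mul, ← hEcard, FiniteField.pow_card, add_comm]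
  obtain ⟨b, hb⟩ : ∃ t : Lf, algebraMap Lf E t = δ * δ ^ q ^ n := by
    refine hfix _ ?_
    rw [mul_pow, ← pow_mul, ← hEcard, FiniteField.pow_card]
    ring
  have ha0 : a ≠ 0 := by
    intro h
    apply hδ
    rw [h, map_zero] at ha
    have : δ ^ q ^ n = δ := by
      have hneg := CharTwo.neg_eq (R := E) δ
      linear_combination - ha + hneg
    obtain ⟨t, ht⟩ := hfix δ this
    exact ⟨t, ht⟩
  -- the explicit form of Q over Lf
  have hQform : ∀ x : Lf, Q x = x ^ q ^ k * x ^ q ^ k + a * (x ^ q ^ k * x) + b * (x * x) := by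
    intro x
    apply (algebraMap Lf E).injective
    rw [hQ x]
    simp only [map_add, map_mul, map_pow, ha, hb]
    ring
  have hqk0 : q ^ k ≠ 0 := by positivity
  have hQ0 : Q 0 = 0 := by
    rw [hQform, zero_pow hqk0]; ring
  have h2L : (2 : Lf) = 0 := CharTwo.two_eq_zero
  have hcol : ∀ x u : Lf, Q x + Q (x + u) = Q u + a * (x ^ q ^ k * u + u ^ q ^ k * x) := by
    intro x u
    rw [hQform x, hQform u, hQform (x + u), hfrobL k x u]
    generalize x ^ q ^ k = X
    generalize u ^ q ^ k = U
    linear_combination (X * X + a * (X * x) + b * (x * x) + X * U + b * (x * u)) * h2L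
  -- setup for the character sums
  have hen : 0 < e * n := by positivity
  have hcard2 : Fintype.card Lf = 2 ^ (e * n) := by rw [hLcard, hq2e, ← pow_mul]
  obtain ⟨z₀, hz₀⟩ := auxTr_exists_ne hen hcard2
  obtain ⟨gU, hg⟩ := IsCyclic.exists_generator (α := Lfˣ)
  set g : Lf := (gU : Lf) with hgdef
  have hgne : g ≠ 0 := gU.ne_zero
  set y : Lf := g * a⁻¹ with hydef
  have hy0 : y ≠ 0 := by
    rw [hydef]
    exact mul_ne_zero hgne (inv_ne_zero ha0)
  have hya : y * a = g := by
    rw [hydef]; field_simp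
  -- character sums
  have hchiadd := auxChi_add (F := Lf) hcard2
  have hS0 : (∑ x : Lf, auxChi (e * n) (y * Q x)) = 0 := by
    have h1 : ∑ x : Lf, auxChi (e * n) (y * Q x) = ∑ c : Lf, auxChi (e * n) (y * c) :=
      Fintype.sum_bijective Q hbij _ _ (fun x => rfl)
    rw [h1]
    have hb2 := aux_balanced hcard2 (fun c => auxTr (e * n) (y * c))
      (fun w z => by
        show auxTr (e * n) (y * (w + z)) = auxTr (e * n) (y * w) + auxTr (e * n) (y * z)
        rw [mul_add, auxTr_add])
      (fun w => auxTr_vals hcard2 _)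
      ⟨y⁻¹ * z₀, by
        show auxTr (e * n) (y * (y⁻¹ * z₀)) ≠ 0
        have hyz : y * (y⁻¹ * z₀) = z₀ := by field_simp
        rw [hyz]; exact hz₀⟩
    simpa [auxChi] using hb2
  have hSS : (∑ x : Lf, auxChi (e * n) (y * Q x)) * (∑ x : Lf, auxChi (e * n) (y * Q x))
      = ∑ u : Lf, auxChi (e * n) (y * Q u)
          * (∑ x : Lf, auxChi (e * n) (g * (x ^ q ^ k * u + u ^ q ^ k * x))) := by
    calc (∑ x : Lf, auxChi (e * n) (y * Q x)) * (∑ z : Lf, auxChi (e * n) (y * Q z))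
        = ∑ x : Lf, ∑ z : Lf, auxChi (e * n) (y * Q x) * auxChi (e * n) (y * Q z) := by
          rw [Finset.sum_mul_sum]
      _ = ∑ x : Lf, ∑ u : Lf, auxChi (e * n) (y * Q x) * auxChi (e * n) (y * Q (x + u)) := by
          refine Finset.sum_congr rfl fun x _ => ?_
          exact (Fintype.sum_equiv (Equiv.addLeft x)
            (fun u => auxChi (e * n) (y * Q x) * auxChi (e * n) (y * Q (x + u)))
            (fun z => auxChi (e * n) (y * Q x) * auxChi (e * n) (y * Q z))
            (fun u => rfl)).symm
      _ = ∑ u : Lf, ∑ x : Lf, auxChi (e * n) (y * Q x) * auxChi (e * n) (y * Q (x + u)) :=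
          Finset.sum_comm
      _ = ∑ u : Lf, auxChi (e * n) (y * Q u)
            * (∑ x : Lf, auxChi (e * n) (g * (x ^ q ^ k * u + u ^ q ^ k * x))) := by
          refine Finset.sum_congr rfl fun u _ => ?_
          rw [Finset.mul_sum]
          refine Finset.sum_congr rfl fun x _ => ?_
          rw [← hchiadd, ← hchiadd]
          congr 1
          rw [← mul_add, hcol x u, mul_add, ← mul_assoc, hya]
  have hmain : ∃ u : Lf, u ≠ 0 ∧
      (∑ x : Lf, auxChi (e * n) (g * (x ^ q ^ k * u + u ^ q ^ k * x))) ≠ 0 := by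
    by_contra hcon
    push_neg at hcon
    have hone : ∑ u : Lf, auxChi (e * n) (y * Q u)
        * (∑ x : Lf, auxChi (e * n) (g * (x ^ q ^ k * u + u ^ q ^ k * x)))
        = (Fintype.card Lf : ℤ) := by
      rw [Finset.sum_eq_single 0 (fun u _ hu => by rw [hcon u hu, mul_zero])
        (fun h => absurd (Finset.mem_univ 0) h)]
      have hterm : ∀ x : Lf, g * (x ^ q ^ k * (0:Lf) + (0:Lf) ^ q ^ k * x) = 0 := by
        intro x; rw [zero_pow hqk0]; ring
      have hsum0 : (∑ x : Lf, auxChi (e * n) (g * (x ^ q ^ k * (0:Lf) + (0:Lf) ^ q ^ k * x)))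
          = (Fintype.card Lf : ℤ) := by
        rw [Finset.sum_congr rfl fun x _ => by rw [hterm x, auxChi_zero]]
        simp [Finset.card_univ]
      rw [hQ0, mul_zero, auxChi_zero, one_mul, hsum0]
    have hcontr := hSS.trans hone
    rw [hS0, mul_zero] at hcontr
    have hcpos := Fintype.card_pos (α := Lf)
    have : Fintype.card Lf = 0 := by exact_mod_cast hcontr.symm
    omega
  obtain ⟨u, hu0, hTu⟩ := hmain
  have hrad : ∀ x : Lf, auxTr (e * n) (g * (x ^ q ^ k * u + u ^ q ^ k * x)) = 0 := by
    by_contra hcon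
    push_neg at hcon
    apply hTu
    have hb2 := aux_balanced hcard2
      (fun x => auxTr (e * n) (g * (x ^ q ^ k * u + u ^ q ^ k * x)))
      (fun w z => by
        show auxTr (e * n) (g * ((w + z) ^ q ^ k * u + u ^ q ^ k * (w + z)))
            = auxTr (e * n) (g * (w ^ q ^ k * u + u ^ q ^ k * w))
              + auxTr (e * n) (g * (z ^ q ^ k * u + u ^ q ^ k * z))
        have hsplit : g * ((w + z) ^ q ^ k * u + u ^ q ^ k * (w + z))
            = g * (w ^ q ^ k * u + u ^ q ^ k * w) + g * (z ^ q ^ k * u + u ^ q ^ k * z) := by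
          rw [hfrobL k w z]; ring
        rw [hsplit, auxTr_add])
      (fun w => auxTr_vals hcard2 _) hcon
    simpa [auxChi] using hb2
  -- the adjoint identity
  set m := n - k % n with hmdef
  have hnpos : 0 < n := by omega
  have hrn : k % n < n := Nat.mod_lt _ hnpos
  have hgcdrec : Nat.gcd (k % n) n = 1 := by
    rw [← Nat.gcd_rec]; exact hk
  have hr0 : k % n ≠ 0 := by
    intro h; rw [h, Nat.gcd_zero_left] at hgcdrec; omega
  have hiter : ∀ (t : ℕ) (x : Lf), x ^ (q ^ n) ^ t = x := by
    intro t
    induction t with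
    | zero => intro x; simp
    | succ t ih =>
        intro x
        rw [pow_succ, pow_mul, ih x, hpowL x]
  have hxk : ∀ x : Lf, (x ^ q ^ k) ^ q ^ m = x := by
    intro x
    rw [← pow_mul, ← pow_add]
    have h1 := Nat.div_add_mod k n
    obtain ⟨D, hD⟩ : ∃ D, n * (k / n) = D := ⟨_, rfl⟩
    rw [hD] at h1
    have hkm : k + m = n * (k / n + 1) := by
      rw [Nat.mul_succ, hD]; omega
    rw [hkm, pow_mul]
    exact hiter _ x
  have hqm2 : q ^ m = 2 ^ (e * m) := by rw [hq2e, ← pow_mul]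
  have hmove : ∀ z x : Lf, auxTr (e * n) (z * x ^ q ^ k) = auxTr (e * n) (z ^ q ^ m * x) := by
    intro z x
    have h1 : auxTr (e * n) ((z * x ^ q ^ k) ^ q ^ m) = auxTr (e * n) (z * x ^ q ^ k) := by
      rw [hqm2]; exact auxTr_sq_pow hcard2 (e * m) _
    rw [← h1, mul_pow, hxk x]
  have hweq : (g * u) ^ q ^ m = g * u ^ q ^ k := by
    by_contra hne
    have hw0 : (g * u) ^ q ^ m + g * u ^ q ^ k ≠ 0 := by
      intro h
      apply hne
      have hneg := CharTwo.neg_eq (R := Lf) (g * u ^ q ^ k)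
      linear_combination h + hneg
    apply hz₀
    have h2 : ∀ x : Lf, auxTr (e * n) (((g * u) ^ q ^ m + g * u ^ q ^ k) * x) = 0 := by
      intro x
      have h3 := hrad x
      have hsplit : g * (x ^ q ^ k * u + u ^ q ^ k * x)
          = (g * u) * x ^ q ^ k + (g * u ^ q ^ k) * x := by ring
      rw [hsplit, auxTr_add, hmove (g * u) x] at h3
      rw [add_mul, auxTr_add]
      exact h3
    have h4 := h2 (((g * u) ^ q ^ m + g * u ^ q ^ k)⁻¹ * z₀)
    rwa [← mul_assoc, mul_inv_cancel₀ hw0, one_mul] at h4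
  -- endgame in the unit group
  have hcardU : Nat.card Lfˣ = q ^ n - 1 := by
    rw [Nat.card_units, Nat.card_eq_fintype_card, hLcard]
  have hordg : orderOf gU = q ^ n - 1 := by
    rw [orderOf_eq_card_of_forall_mem_zpowers hg, hcardU]
  obtain ⟨n2, hn2⟩ := hn
  have hq21 : q ^ 2 - 1 ∣ q ^ n - 1 := by
    have h := Nat.sub_dvd_pow_sub_pow (q ^ 2) 1 n2
    rw [← pow_mul, one_pow] at h
    have h2n : 2 * n2 = n := by omega
    rwa [h2n] at h
  set M := (q ^ n - 1) / (q ^ 2 - 1) with hMdef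
  have hM : (q ^ 2 - 1) * M = q ^ n - 1 := Nat.mul_div_cancel' hq21
  have hqn4 : 4 ≤ q ^ n := by
    calc (4:ℕ) = 2 ^ 2 := by norm_num
      _ ≤ q ^ 2 := Nat.pow_le_pow_left hq2 2
      _ ≤ q ^ n := Nat.pow_le_pow_right (by omega) hn'
  have hq2sq : 2 * q ≤ q ^ 2 := by
    rw [pow_two]
    exact Nat.mul_le_mul_right q hq2
  have hMpos : 0 < M := by
    rcases Nat.eq_zero_or_pos M with h | h
    · rw [h, mul_zero] at hM; omega
    · exact h
  set U : Lfˣ := Units.mk0 u hu0 with hUdef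
  have hU1 : U ^ (q ^ n - 1) = 1 := by
    rw [← hcardU]; exact pow_card_eq_one'
  have hgUeq : gU ^ q ^ m * U ^ q ^ m = gU * U ^ q ^ k := by
    refine Units.ext ?_
    have hval : ((gU ^ q ^ m * U ^ q ^ m : Lfˣ) : Lf) = (g * u) ^ q ^ m := by
      simp only [Units.val_mul, Units.val_pow_eq_pow_val, hUdef, Units.val_mk0, ← hgdef]
      rw [mul_pow]
    have hval2 : ((gU * U ^ q ^ k : Lfˣ) : Lf) = g * u ^ q ^ k := by
      simp only [Units.val_mul, Units.val_pow_eq_pow_val, hUdef, Units.val_mk0, ← hgdef]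
    rw [hval, hval2]
    exact hweq
  have key : ∀ i j : ℕ, i ≤ j → 2 ∣ (j - i) → U ^ (q ^ j * M) = U ^ (q ^ i * M) := by
    intro i j hij hpar
    obtain ⟨t, ht⟩ : ∃ t, j = i + 2 * t := ⟨(j - i) / 2, by omega⟩
    subst ht
    obtain ⟨s, hs⟩ : q ^ 2 - 1 ∣ q ^ (2 * t) - 1 := by
      have h := Nat.sub_dvd_pow_sub_pow (q ^ 2) 1 t
      rwa [← pow_mul, one_pow] at h
    have h1le : 1 ≤ q ^ (2 * t) := Nat.one_le_pow _ _ (by omega)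
    have hexp : q ^ (i + 2 * t) * M = (q ^ n - 1) * (q ^ i * s) + q ^ i * M := by
      rw [pow_add]
      have hqt : q ^ (2 * t) = (q ^ 2 - 1) * s + 1 := by omega
      rw [hqt, ← hM]
      ring
    rw [hexp, pow_add, pow_mul, hU1, one_pow, one_mul]
  have hparkm : k % 2 = m % 2 := by
    have h1 := Nat.div_add_mod k n
    obtain ⟨c, hc⟩ : 2 ∣ n * (k / n) := Dvd.dvd.mul_right ⟨n2, by omega⟩ _
    rw [hc] at h1
    omega
  have hUkm : U ^ (q ^ k * M) = U ^ (q ^ m * M) := by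
    rcases le_total k m with h | h
    · exact (key k m h (by omega)).symm
    · exact key m k h (by omega)
  have hgM : gU ^ (q ^ m * M) * U ^ (q ^ m * M) = gU ^ M * U ^ (q ^ k * M) := by
    have h := congrArg (fun z : Lfˣ => z ^ M) hgUeq
    simpa [mul_pow, ← pow_mul] using h
  rw [hUkm] at hgM
  have hgg : gU ^ (q ^ m * M) = gU ^ M := mul_right_cancel hgM
  have hmodg : q ^ m * M ≡ M [MOD q ^ n - 1] := by
    have h := (pow_eq_pow_iff_modEq).mp hgg
    rwa [hordg] at h
  have hqmpos : 0 < q ^ m := by positivity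
  have hdvd : q ^ n - 1 ∣ (q ^ m - 1) * M := by
    have hle : M ≤ q ^ m * M := Nat.le_mul_of_pos_left M hqmpos
    have h := (Nat.modEq_iff_dvd' hle).mp hmodg.symm
    have heq : q ^ m * M - M = (q ^ m - 1) * M := by
      rw [Nat.sub_mul, one_mul]
    rwa [heq] at h
  have hdvd2 : q ^ 2 - 1 ∣ q ^ m - 1 := by
    rw [← hM] at hdvd
    exact (Nat.mul_dvd_mul_iff_right hMpos).mp hdvd
  -- m is odd, contradiction
  have hrodd : k % n % 2 = 1 := by
    rcases Nat.even_or_odd (k % n) with heo | ho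
    · exfalso
      obtain ⟨r2, hr2⟩ := heo
      have h2 : 2 ∣ Nat.gcd (k % n) n := Nat.dvd_gcd ⟨r2, by omega⟩ ⟨n2, by omega⟩
      rw [hgcdrec] at h2; omega
    · exact Nat.odd_iff.mp ho
  have hmodd : m % 2 = 1 := by omega
  obtain ⟨t, ht⟩ : ∃ t, m = 2 * t + 1 := ⟨m / 2, by omega⟩
  have hmq : q ^ m = (q ^ 2) ^ t * q := by
    rw [ht, pow_add, pow_mul, pow_one]
  have h2t1 : 1 ≤ (q ^ 2) ^ t := Nat.one_le_pow _ _ (by omega)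
  have hcong1 : (1:ℕ) ≡ (q ^ 2) ^ t [MOD q ^ 2 - 1] := by
    rw [Nat.modEq_iff_dvd' h2t1]
    have h := Nat.sub_dvd_pow_sub_pow (q ^ 2) 1 t
    rwa [one_pow] at h
  have hcongm : q ≡ q ^ m [MOD q ^ 2 - 1] := by
    calc q = 1 * q := (one_mul q).symm
      _ ≡ (q ^ 2) ^ t * q [MOD q ^ 2 - 1] := hcong1.mul_right q
      _ = q ^ m := hmq.symm
  have hcong2 : (1:ℕ) ≡ q ^ m [MOD q ^ 2 - 1] := by
    rw [Nat.modEq_iff_dvd' (Nat.one_le_pow _ _ (by omega))]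
    exact hdvd2
  have hcongq : (1:ℕ) ≡ q [MOD q ^ 2 - 1] := hcong2.trans hcongm.symm
  have hfdvd : q ^ 2 - 1 ∣ q - 1 := (Nat.modEq_iff_dvd' (by omega)).mp hcongq
  have hlast : q ^ 2 - 1 ≤ q - 1 := Nat.le_of_dvd (by omega) hfdvd
  omega
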